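/- Fix α ∈ [0,1) and s ∈ S, and let 𝑺 = (s, …, s) be the constant n-tuple. Then inf{E[F] : F ∈ 𝒻({𝑺}, α)} = S_min·(1 − α^{1/n}) + s·α^{1/n}. (Note that P_F[{𝑺}] = F(s)^n, so 𝒢({𝑺}, α) = {F : F(s)^n > α}.) -/

import Mathlib

noncomputable section

/-- Distributions on the finite support `S`, viewed as points of the probability
simplex inside `EuclideanSpace ℝ S` (Euclidean metric). -/
def distSet (S : Finset ℝ) : Set (EuclideanSpace ℝ ↥S) :=
  {F | (∀ s, 0 ≤ F s) ∧ ∑ s, F s = 1}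

/-- Mean of a distribution on `S`. -/
def distMean (S : Finset ℝ) (F : EuclideanSpace ℝ ↥S) : ℝ :=
  ∑ s : ↥S, F s * (s : ℝ)

open Classical in
/-- `P_F[A]`: probability of a set `A` of `n`-tuples under `n` i.i.d. draws from `F`. -/
def probOf (S : Finset ℝ) (n : ℕ) (F : EuclideanSpace ℝ ↥S)
    (A : Set (Fin n → ↥S)) : ℝ :=
  ∑ y : Fin n → ↥S, if y ∈ A then ∏ i, F (y i) else 0

/-- The interior likely set `𝒢(A, α)`. -/
def intLikely (S : Finset ℝ) (n : ℕ) (A : Set (Fin n → ↥S)) (α : ℝ) :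
    Set (EuclideanSpace ℝ ↥S) :=
  {F | F ∈ distSet S ∧ α < probOf S n F A}

/-- The likely set `𝒻(A, α)`: the closure of `𝒢(A, α)`. -/
def likely (S : Finset ℝ) (n : ℕ) (A : Set (Fin n → ↥S)) (α : ℝ) :
    Set (EuclideanSpace ℝ ↥S) :=
  closure (intLikely S n A α)



/-- the optimal bound at the homogeneous sample `𝑺 = (s,…,s)`:
`inf {E[F] : F ∈ 𝒻({𝑺}, α)} = S_min (1 - α^{1/n}) + s α^{1/n}`. -/
theorem stmt7 (S : Finset ℝ) (hS : S.Nonempty) (n : ℕ) (hn : 1 ≤ n)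
    (α : ℝ) (hα0 : 0 ≤ α) (hα1 : α < 1) (s : ↥S) :
    sInf (distMean S '' likely S n {fun _ => s} α) =
      S.min' hS * (1 - α ^ ((1 : ℝ) / n)) + (s : ℝ) * α ^ ((1 : ℝ) / n) := by
  classical
  have hn0 : (n : ℝ) ≠ 0 := Nat.cast_ne_zero.mpr (by omega)
  set β : ℝ := α ^ ((1 : ℝ) / n) with hβdef
  have hβ0 : 0 ≤ β := Real.rpow_nonneg hα0 _
  have hβ1 : β < 1 := Real.rpow_lt_one hα0 hα1 (by positivity)
  have hβn : β ^ n = α := by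
    rw [hβdef, ← Real.rpow_natCast (α ^ ((1:ℝ)/n)) n, ← Real.rpow_mul hα0,
      one_div, inv_mul_cancel₀ hn0, Real.rpow_one]
  set m : ℝ := S.min' hS with hmdef
  have hmS : m ∈ S := S.min'_mem hS
  set mEl : ↥S := ⟨m, hmS⟩ with hmEl
  have hm_le : ∀ t : ↥S, m ≤ (t : ℝ) := fun t => S.min'_le t t.2
  -- probability of the constant sample
  have hprob : ∀ F : EuclideanSpace ℝ ↥S, probOf S n F {fun _ => s} = F s ^ n := by
    intro F
    unfold probOf
    simp [Set.mem_singleton_iff, Finset.sum_ite_eq']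
  -- the closed superset
  set C : Set (EuclideanSpace ℝ ↥S) :=
    {F | (∀ t, 0 ≤ F t) ∧ (∑ t, F t) = 1 ∧ β ≤ F s} with hCdef
  have hCclosed : IsClosed C := by
    have hc : ∀ t : ↥S, Continuous fun F : EuclideanSpace ℝ ↥S => F t := fun t =>
      (EuclideanSpace.proj t).continuous
    have h1 : IsClosed {F : EuclideanSpace ℝ ↥S | ∀ t, 0 ≤ F t} := by
      have : {F : EuclideanSpace ℝ ↥S | ∀ t, 0 ≤ F t} = ⋂ t, {F | 0 ≤ F t} := by
        ext F; simp
      rw [this]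
      exact isClosed_iInter fun t => isClosed_le continuous_const (hc t)
    have h2 : IsClosed {F : EuclideanSpace ℝ ↥S | (∑ t, F t) = 1} :=
      isClosed_eq (continuous_finset_sum _ fun t _ => hc t) continuous_const
    have h3 : IsClosed {F : EuclideanSpace ℝ ↥S | β ≤ F s} :=
      isClosed_le continuous_const (hc s)
    have : C = {F : EuclideanSpace ℝ ↥S | ∀ t, 0 ≤ F t} ∩
        ({F | (∑ t, F t) = 1} ∩ {F | β ≤ F s}) := by
      ext F; simp [hCdef, and_assoc]
    rw [this]
    exact h1.inter (h2.inter h3)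
  have hsub : intLikely S n {fun _ => s} α ⊆ C := by
    rintro F ⟨⟨h0, h1⟩, h2⟩
    rw [hprob] at h2
    refine ⟨h0, h1, ?_⟩
    calc β = α ^ ((1:ℝ)/n) := rfl
      _ ≤ (F s ^ n) ^ ((1:ℝ)/n) := Real.rpow_le_rpow hα0 h2.le (by positivity)
      _ = F s := by
          rw [← Real.rpow_natCast (F s) n, ← Real.rpow_mul (h0 s),
            mul_one_div, div_self hn0, Real.rpow_one]
  have hclosure : likely S n {fun _ => s} α ⊆ C := closure_minimal hsub hCclosed
  -- lower bound on C
  have hlb : ∀ F ∈ C, m * (1 - β) + (s : ℝ) * β ≤ distMean S F := by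
    rintro F ⟨h0, h1, hs⟩
    have hsplit : distMean S F = F s * s + ∑ t ∈ Finset.univ.erase s, F t * t := by
      rw [distMean, ← Finset.add_sum_erase _ _ (Finset.mem_univ s)]
    have hsum2 : F s + ∑ t ∈ Finset.univ.erase s, F t = 1 := by
      rw [Finset.add_sum_erase _ _ (Finset.mem_univ s)]; exact h1
    have hge : ∑ t ∈ Finset.univ.erase s, F t * m ≤ ∑ t ∈ Finset.univ.erase s, F t * t :=
      Finset.sum_le_sum fun t _ => mul_le_mul_of_nonneg_left (hm_le t) (h0 t)
    have heq : ∑ t ∈ Finset.univ.erase s, F t * m = (1 - F s) * m := by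
      rw [← Finset.sum_mul]; congr 1; linarith
    have hsm : m ≤ (s : ℝ) := hm_le s
    nlinarith [mul_nonneg (sub_nonneg.mpr hs) (sub_nonneg.mpr hsm)]
  -- the optimal distribution
  set F₀ : EuclideanSpace ℝ ↥S :=
    WithLp.toLp 2 (fun t => β * (if t = s then 1 else 0) + (1 - β) * (if t = mEl then 1 else 0)) with hF₀
  have hF₀apply : ∀ t, F₀ t = β * (if t = s then 1 else 0) + (1 - β) * (if t = mEl then 1 else 0) :=
    fun t => rfl
  have hF₀nonneg : ∀ t, 0 ≤ F₀ t := by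
    intro t; rw [hF₀apply]
    have : (0:ℝ) ≤ 1 - β := by linarith
    positivity
  have hF₀sum : ∑ t, F₀ t = 1 := by
    simp only [hF₀apply]
    rw [Finset.sum_add_distrib, ← Finset.mul_sum, ← Finset.mul_sum]
    simp [Finset.sum_ite_eq']
  have hF₀s : β ≤ F₀ s := by
    rw [hF₀apply, if_pos rfl]
    rcases eq_or_ne s mEl with h | h
    · rw [if_pos h]; linarith
    · rw [if_neg h]; linarith
  have hF₀s' : F₀ s ≤ 1 := by
    rw [hF₀apply, if_pos rfl]
    rcases eq_or_ne s mEl with h | h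
    · rw [if_pos h]; linarith
    · rw [if_neg h]; linarith
  have hF₀mean : distMean S F₀ = m * (1 - β) + (s : ℝ) * β := by
    unfold distMean
    simp only [hF₀apply, add_mul, mul_assoc, ite_mul, one_mul, zero_mul]
    rw [Finset.sum_add_distrib, ← Finset.mul_sum, ← Finset.mul_sum]
    simp [Finset.sum_ite_eq']
    ring
  -- F₀ is in the likely set
  have hF₀mem : F₀ ∈ likely S n {fun _ => s} α := by
    set v : EuclideanSpace ℝ ↥S := WithLp.toLp 2 (fun t => (if t = s then 1 else 0) - F₀ t) with hv
    have hGapply : ∀ (c : ℝ) (t : ↥S), (F₀ + c • v) t = F₀ t + c * ((if t = s then 1 else 0) - F₀ t) :=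
      fun c t => rfl
    have htend : Filter.Tendsto (fun k : ℕ => F₀ + (1 / ((k:ℝ) + 1)) • v)
        Filter.atTop (nhds F₀) := by
      have h0 : Filter.Tendsto (fun k : ℕ => 1 / ((k:ℝ) + 1)) Filter.atTop (nhds 0) :=
        tendsto_one_div_add_atTop_nhds_zero_nat
      have := ((h0.smul_const v).const_add F₀)
      simpa using this
    apply mem_closure_of_tendsto htend
    filter_upwards with k
    set c : ℝ := 1 / ((k:ℝ) + 1) with hc
    have hc0 : 0 < c := by positivity
    have hc1 : c ≤ 1 := by
      rw [hc, div_le_one (by positivity)]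
      simp [Nat.cast_nonneg]
    refine ⟨⟨?_, ?_⟩, ?_⟩
    · intro t
      rw [hGapply]
      have h0t := hF₀nonneg t
      by_cases ht : t = s <;> simp [ht] <;> nlinarith
    · simp only [hGapply]
      rw [Finset.sum_add_distrib, ← Finset.mul_sum, Finset.sum_sub_distrib]
      simp only [Finset.sum_ite_eq', Finset.mem_univ, if_true]
      rw [hF₀sum]; ring
    · rw [hprob, ← hβn]
      have hGs : (F₀ + c • v) s = F₀ s + c * (1 - F₀ s) := by
        rw [hGapply]; simp
      have : β < (F₀ + c • v) s := by
        rw [hGs]; nlinarith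
      exact pow_lt_pow_left₀ this hβ0 (by omega)
  -- conclude
  have himg : m * (1 - β) + (s : ℝ) * β ∈ distMean S '' likely S n {fun _ => s} α :=
    ⟨F₀, hF₀mem, hF₀mean⟩
  have hbdd : ∀ x ∈ distMean S '' likely S n {fun _ => s} α, m * (1 - β) + (s:ℝ) * β ≤ x := by
    rintro x ⟨F, hF, rfl⟩
    exact hlb F (hclosure hF)
  exact le_antisymm (csInf_le ⟨_, hbdd⟩ himg) (le_csInf ⟨_, himg⟩ hbdd)

end
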